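/- Let R ⊆ 2^[2n] be a restrictive collection and let S ∈ R. Then there exists S⁺ ⊆ [2n] with S ⊆ S⁺ and |S⁺| = n + ⌊n/2⌋ such that the collection R ∪ {S⁺} is again restrictive. -/

import Mathlib

open Finset BigOperators

/-- The ground set `[m] = {1, ..., m}`. -/
def ground (m : ℕ) : Finset ℕ := Finset.Icc 1 m

/-- `f` is a poset embedding of `2^[n]` into `2^[m]`: it maps subsets of `[n]`
to subsets of `[m]`, is injective, and satisfies `S ⊆ T ↔ f S ⊆ f T`. -/
def IsEmbedding (n m : ℕ) (f : Finset ℕ → Finset ℕ) : Prop :=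
  (∀ S, S ⊆ ground n → f S ⊆ ground m) ∧
  (∀ S T, S ⊆ ground n → T ⊆ ground n → (S ⊆ T ↔ f S ⊆ f T)) ∧
  (∀ S T, S ⊆ ground n → T ⊆ ground n → f S = f T → S = T)

/-- `Q` is a copy of `2^[n]` in `2^[m]`: the image of the powerset of `[n]`
under some poset embedding. -/
def IsCopy (n m : ℕ) (Q : Finset (Finset ℕ)) : Prop :=
  ∃ f, IsEmbedding n m f ∧ Q = (ground n).powerset.image f

/-- The `k`-th pair `{2k-1, 2k}` is contained in `S`. -/
def PairIn (k : ℕ) (S : Finset ℕ) : Prop := 2*k - 1 ∈ S ∧ 2*k ∈ S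

/-- `S` has a pair: it contains both elements of some pair. -/
def HasPair (n : ℕ) (S : Finset ℕ) : Prop := ∃ k ∈ Finset.Icc 1 n, PairIn k S

/-- `S` misses a pair: it contains neither element of some pair. -/
def MissesPair (n : ℕ) (S : Finset ℕ) : Prop :=
  ∃ k ∈ Finset.Icc 1 n, 2*k - 1 ∉ S ∧ 2*k ∉ S

/-- The partner of `x`: the other element of the pair containing `x`. -/
def partner (x : ℕ) : ℕ := if x % 2 = 0 then x - 1 else x + 1

/-- `x` is a single in `S`: `x ∈ S` but its partner is not in `S`. -/
def IsSingleIn (x : ℕ) (S : Finset ℕ) : Prop := x ∈ S ∧ partner x ∉ S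

/-- The indices of the pairs fully contained in `S`. -/
def pairIndices (n : ℕ) (S : Finset ℕ) : Finset ℕ :=
  (Finset.Icc 1 n).filter (fun k => 2*k - 1 ∈ S ∧ 2*k ∈ S)

/-- The set of singles of `S`. -/
def singles (S : Finset ℕ) : Finset ℕ := S.filter (fun x => partner x ∉ S)

/-- Every `S ∈ R` with `⌈n/2⌉ ≤ |S| < n` has a pair. -/
def PairEnforcing (n : ℕ) (R : Set (Finset ℕ)) : Prop :=
  ∀ S ∈ R, (n + 1) / 2 ≤ S.card → S.card < n → HasPair n S

/-- Every `S ∈ R` with `n < |S| ≤ n + ⌊n/2⌋` misses no pair. -/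
def MissForbidding (n : ℕ) (R : Set (Finset ℕ)) : Prop :=
  ∀ S ∈ R, n < S.card → S.card ≤ n + n / 2 → ¬ MissesPair n S

/-- Every `S ∈ R` has `|S| ≤ n + ⌊n/2⌋`. -/
def NotTooHigh (n : ℕ) (R : Set (Finset ℕ)) : Prop :=
  ∀ S ∈ R, S.card ≤ n + n / 2

/-- Whenever `S₁, S₂ ⊆ [2n]` have size `n`, `|S₁ ∪ S₂| = n + 1` and neither has
a pair, at most one of them is in `R`. -/
def FlipSusceptible (n : ℕ) (R : Set (Finset ℕ)) : Prop :=
  ∀ S₁ S₂ : Finset ℕ, S₁ ⊆ ground (2*n) → S₂ ⊆ ground (2*n) →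
    S₁.card = n → S₂.card = n → (S₁ ∪ S₂).card = n + 1 →
    ¬ HasPair n S₁ → ¬ HasPair n S₂ → ¬ (S₁ ∈ R ∧ S₂ ∈ R)

/-- `R` is restrictive: pair-enforcing, miss-forbidding, not-too-high and
flip-susceptible. -/
def Restrictive (n : ℕ) (R : Set (Finset ℕ)) : Prop :=
  PairEnforcing n R ∧ MissForbidding n R ∧ NotTooHigh n R ∧ FlipSusceptible n R

lemma n1aux (X : Finset ℕ) (hX : X ⊆ ground 2) (hc : X.card = 1) :
    X = {1} ∨ X = {2} := by
  obtain ⟨a, rfl⟩ := Finset.card_eq_one.mp hc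
  have := hX (Finset.mem_singleton_self a)
  rw [ground, Finset.mem_Icc] at this
  obtain ⟨h1, h2⟩ := this
  interval_cases a <;> simp

/-- If `R ⊆ 2^[2n]` is restrictive and `S ∈ R`, then there is
`S⁺ ⊇ S` with `|S⁺| = n + ⌊n/2⌋` such that `R ∪ {S⁺}` is again restrictive. -/
theorem statement4 (n : ℕ) (R : Set (Finset ℕ))
    (hRsub : ∀ S ∈ R, S ⊆ ground (2*n)) (hR : Restrictive n R)
    (S : Finset ℕ) (hS : S ∈ R) :
    ∃ S' : Finset ℕ, S ⊆ S' ∧ S' ⊆ ground (2*n) ∧ S'.card = n + n / 2 ∧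
      Restrictive n (insert S' R) := by
  by_cases hn1 : n = 1
  · -- special case n = 1
    subst hn1
    have hSg := hRsub S hS
    have hcard : S.card ≤ 1 := by
      have := hR.2.2.1 S hS; omega
    by_cases hSe : S = ∅
    · by_cases h1 : ({1} : Finset ℕ) ∈ R
      · refine ⟨{1}, by simp [hSe], ?_, by norm_num, ?_⟩
        · intro x hx; simp at hx; subst hx; simp [ground]
        · rw [Set.insert_eq_self.mpr h1]; exact hR
      · by_cases h2 : ({2} : Finset ℕ) ∈ R
        · refine ⟨{2}, by simp [hSe], ?_, by norm_num, ?_⟩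
          · intro x hx; simp at hx; subst hx; simp [ground]
          · rw [Set.insert_eq_self.mpr h2]; exact hR
        · refine ⟨{2}, by simp [hSe], ?_, by norm_num, ?_, ?_, ?_, ?_⟩
          · intro x hx; simp at hx; subst hx; simp [ground]
          · intro X hX hc1 hc2; omega
          · intro X hX hc1 hc2
            rcases hX with rfl | hX
            · simp at hc1
            · exact hR.2.1 X hX hc1 hc2
          · intro X hX
            rcases hX with rfl | hX
            · norm_num
            · exact hR.2.2.1 X hX
          · intro S₁ S₂ hg1 hg2 hc1 hc2 hcu hp1 hp2 hmem
            obtain ⟨hm1, hm2⟩ := hmem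
            rcases hm1 with rfl | hm1 <;> rcases hm2 with rfl | hm2
            · simp at hcu
            · rcases n1aux S₂ hg2 hc2 with rfl | rfl
              · exact h1 hm2
              · simp at hcu
            · rcases n1aux S₁ hg1 hc1 with rfl | rfl
              · exact h1 hm1
              · simp at hcu
            · exact hR.2.2.2 S₁ S₂ hg1 hg2 hc1 hc2 hcu hp1 hp2 ⟨hm1, hm2⟩
    · have hcard1 : S.card = 1 := by
        have := Finset.card_pos.mpr (Finset.nonempty_of_ne_empty hSe); omega
      refine ⟨S, Finset.Subset.refl S, hSg, by norm_num [hcard1], ?_⟩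
      rw [Set.insert_eq_self.mpr hS]; exact hR
  · -- general case n ≠ 1
    have hSg := hRsub S hS
    have hnth : S.card ≤ n + n / 2 := hR.2.2.1 S hS
    set M : Finset ℕ := (Finset.Icc 1 n).filter (fun k => 2*k-1 ∉ S ∧ 2*k ∉ S) with hM
    set D : Finset ℕ := M.biUnion (fun k => ({2*k-1, 2*k} : Finset ℕ)) with hD
    have hMmem : ∀ k ∈ M, 1 ≤ k ∧ k ≤ n ∧ 2*k-1 ∉ S ∧ 2*k ∉ S := by
      intro k hk
      rw [hM, Finset.mem_filter, Finset.mem_Icc] at hk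
      exact ⟨hk.1.1, hk.1.2, hk.2.1, hk.2.2⟩
    have hDcard : D.card = 2 * M.card := by
      rw [hD, Finset.card_biUnion]
      · rw [Finset.sum_congr rfl (fun k hk => ?_), Finset.sum_const, smul_eq_mul,
          Nat.mul_comm]
        have h1 := (hMmem k hk).1
        rw [Finset.card_insert_of_notMem (by simp; omega), Finset.card_singleton]
      · intro a ha b hb hab
        have h1 := (hMmem a ha).1
        have h2 := (hMmem b hb).1
        rw [Function.onFun, Finset.disjoint_left]
        intro x hx hx'
        simp only [Finset.mem_insert, Finset.mem_singleton] at hx hx'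
        omega
    have hDS : Disjoint S D := by
      rw [Finset.disjoint_right]
      intro x hx
      rw [hD, Finset.mem_biUnion] at hx
      obtain ⟨k, hk, hxk⟩ := hx
      obtain ⟨_, _, hk1, hk2⟩ := hMmem k hk
      simp only [Finset.mem_insert, Finset.mem_singleton] at hxk
      rcases hxk with rfl | rfl
      · exact hk1
      · exact hk2
    have hDg : D ⊆ ground (2*n) := by
      intro x hx
      rw [hD, Finset.mem_biUnion] at hx
      obtain ⟨k, hk, hxk⟩ := hx
      obtain ⟨h1, h2, _, _⟩ := hMmem k hk
      simp only [Finset.mem_insert, Finset.mem_singleton] at hxk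
      rw [ground, Finset.mem_Icc]
      omega
    have hground : (ground (2*n)).card = 2*n := by
      rw [ground, Nat.card_Icc]; omega
    have hkey : S.card + 2 * M.card ≤ 2*n := by
      have h1 : (S ∪ D).card = S.card + D.card := Finset.card_union_of_disjoint hDS
      have h2 : (S ∪ D).card ≤ 2*n := by
        rw [← hground]
        exact Finset.card_le_card (Finset.union_subset hSg hDg)
      omega
    have hMsmall : S.card + M.card ≤ n + n / 2 := by
      by_cases hcn : S.card ≤ n
      · omega
      · have hmiss := hR.2.1 S hS (by omega) hnth
        have hMe : M = ∅ := by
          by_contra hne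
          obtain ⟨k, hk⟩ := Finset.nonempty_of_ne_empty hne
          obtain ⟨h1, h2, h3, h4⟩ := hMmem k hk
          exact hmiss ⟨k, Finset.mem_Icc.mpr ⟨h1, h2⟩, h3, h4⟩
        rw [hMe]; simp; omega
    set T : Finset ℕ := S ∪ M.image (fun k => 2*k) with hT
    have hTg : T ⊆ ground (2*n) := by
      rw [hT]
      refine Finset.union_subset hSg ?_
      intro x hx
      rw [Finset.mem_image] at hx
      obtain ⟨k, hk, rfl⟩ := hx
      obtain ⟨h1, h2, _, _⟩ := hMmem k hk
      rw [ground, Finset.mem_Icc]; omega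
    have hTcard : T.card ≤ n + n / 2 := by
      have h1 := Finset.card_union_le S (M.image (fun k => 2*k))
      have h2 := Finset.card_image_le (s := M) (f := fun k => 2*k)
      rw [hT]; omega
    have hTmiss : ¬ MissesPair n T := by
      rintro ⟨k, hk, h1, h2⟩
      apply h2
      rw [hT, Finset.mem_union]
      right
      rw [Finset.mem_image]
      refine ⟨k, ?_, rfl⟩
      rw [hM, Finset.mem_filter]
      rw [hT, Finset.mem_union, not_or] at h1 h2
      exact ⟨hk, h1.1, h2.1⟩
    obtain ⟨S', hTS', hS'g, hS'card⟩ :=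
      Finset.exists_subsuperset_card_eq hTg hTcard (by omega)
    refine ⟨S', (Finset.subset_union_left).trans hTS', hS'g, hS'card, ?_, ?_, ?_, ?_⟩
    · intro X hX h1 h2
      rcases hX with rfl | hX
      · omega
      · exact hR.1 X hX h1 h2
    · intro X hX h1 h2
      rcases hX with rfl | hX
      · rintro ⟨k, hk, a, b⟩
        exact hTmiss ⟨k, hk, fun h => a (hTS' h), fun h => b (hTS' h)⟩
      · exact hR.2.1 X hX h1 h2
    · intro X hX
      rcases hX with rfl | hX
      · omega
      · exact hR.2.2.1 X hX
    · intro S₁ S₂ hg1 hg2 hc1 hc2 hcu hp1 hp2 hmem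
      obtain ⟨hm1, hm2⟩ := hmem
      have hle := Finset.card_union_le S₁ S₂
      rcases hm1 with rfl | hm1 <;> rcases hm2 with rfl | hm2
      · omega
      · omega
      · omega
      · exact hR.2.2.2 S₁ S₂ hg1 hg2 hc1 hc2 hcu hp1 hp2 ⟨hm1, hm2⟩
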